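/- For every n ∈ ℕ and p ≥ 1, with σ̂(ζ) = (1+ζ)^n, the ℝ-linear span of the set {σ̂(qᵀz) : q ∈ ℝ^p}, viewed inside the polynomial ring ℝ[z_1, …, z_p] (where σ̂(qᵀz) = (1 + q_1 z_1 + ⋯ + q_p z_p)^n), equals the space of all polynomials in z_1, …, z_p of total degree at most n. -/

import Mathlib

open MvPolynomial


private lemma coeff_W_nonneg (p n : ℕ) (α : Fin p →₀ ℕ) :
    0 ≤ coeff α ((1 + ∑ i : Fin p, X i : MvPolynomial (Fin p) ℝ) ^ n) := by
  induction n generalizing α with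
  | zero =>
    simp only [pow_zero, coeff_one]
    split <;> norm_num
  | succ n ih =>
    rw [pow_succ, mul_add, mul_one, coeff_add, Finset.mul_sum, coeff_sum]
    refine add_nonneg (ih α) (Finset.sum_nonneg fun i _ => ?_)
    rw [coeff_mul_X']
    split
    · exact ih _
    · exact le_refl 0

private lemma coeff_W_pos (p n : ℕ) (α : Fin p →₀ ℕ) (h : (α.sum fun _ e => e) ≤ n) :
    0 < coeff α ((1 + ∑ i : Fin p, X i : MvPolynomial (Fin p) ℝ) ^ n) := by
  induction n generalizing α with
  | zero =>
    have : α = 0 := by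
      ext i
      rw [Finsupp.sum] at h
      by_cases hm : i ∈ α.support
      · have := Finset.single_le_sum (f := fun j => α j) (fun _ _ => Nat.zero_le _) hm
        simpa using Nat.le_antisymm (this.trans h) (Nat.zero_le _)
      · simpa using Finsupp.notMem_support_iff.mp hm
    simp [this]
  | succ n ih =>
    rw [pow_succ, mul_add, mul_one, coeff_add, Finset.mul_sum, coeff_sum]
    by_cases hle : (α.sum fun _ e => e) ≤ n
    · refine lt_of_lt_of_le (ih α hle) (le_add_of_nonneg_right (Finset.sum_nonneg fun i _ => ?_))
      rw [coeff_mul_X']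
      split
      · exact coeff_W_nonneg p n _
      · exact le_refl 0
    · -- degree of α is exactly n+1, pick i with α i ≠ 0
      have hsum : (α.sum fun _ e => e) = n + 1 := le_antisymm h (not_le.mp hle)
      have hα : α ≠ 0 := by
        intro h0; rw [h0] at hsum; simp at hsum
      obtain ⟨i, hi⟩ : ∃ i, α i ≠ 0 := by
        by_contra hc
        push_neg at hc
        exact hα (Finsupp.ext hc)
      have hmem : i ∈ α.support := Finsupp.mem_support_iff.mpr hi
      have hsub : ((α - Finsupp.single i 1).sum fun _ e => e) ≤ n := by
        have hrec : α = (α - Finsupp.single i 1) + Finsupp.single i 1 := by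
          ext j
          by_cases hji : j = i
          · subst hji
            simp [Finsupp.sub_apply, Finsupp.single_apply, Nat.sub_add_cancel (Nat.one_le_iff_ne_zero.mpr hi)]
          · simp [Finsupp.sub_apply, Finsupp.single_apply, Ne.symm hji]
        have : (α.sum fun _ e => e) = ((α - Finsupp.single i 1).sum fun _ e => e) + 1 := by
          conv_lhs => rw [hrec]
          rw [Finsupp.sum_add_index' (fun _ => rfl) (fun _ _ _ => rfl)]
          simp
        omega
      refine lt_of_lt_of_le (ih _ hsub) (le_add_of_nonneg_of_le (coeff_W_nonneg p n α) ?_)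
      refine Finset.single_le_sum (f := fun j => coeff α ((1 + ∑ k : Fin p, X k) ^ n * X j)) (fun j _ => ?_) (Finset.mem_univ i) |>.trans' ?_
      · simp only [coeff_mul_X']
        split
        · exact coeff_W_nonneg p n _
        · exact le_refl 0
      · rw [coeff_mul_X', if_pos hmem]


private lemma key_lemma (p n : ℕ) (f : Module.Dual ℝ (MvPolynomial (Fin p) ℝ))
    (hf : ∀ q : Fin p → ℝ, f ((1 + ∑ i : Fin p, C (q i) * X i) ^ n) = 0)
    (α : Fin p →₀ ℕ) (h : (α.sum fun _ e => e) ≤ n) :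
    f ((monomial α 1 : MvPolynomial (Fin p) ℝ)) = 0 := by
  set W : MvPolynomial (Fin p) ℝ := (1 + ∑ i : Fin p, X i) ^ n with hW
  set φ : MvPolynomial (Fin p) ℝ →ₐ[ℝ] MvPolynomial (Fin p) (MvPolynomial (Fin p) ℝ) :=
    aeval (fun i => (C (X i) * X i : MvPolynomial (Fin p) (MvPolynomial (Fin p) ℝ))) with hφ
  set F := φ W with hF
  have hφmon : ∀ (β : Fin p →₀ ℕ) (c : ℝ),
      φ (monomial β c) = monomial β (monomial β c) := by
    intro β c
    rw [hφ]
    simp only [monomial_eq, map_mul, aeval_C, algebraMap_eq, mul_pow, Finsupp.prod]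
    rw [map_prod]
    simp only [map_pow, aeval_X, mul_pow, Finset.prod_mul_distrib,
      IsScalarTower.algebraMap_apply ℝ (MvPolynomial (Fin p) ℝ)
        (MvPolynomial (Fin p) (MvPolynomial (Fin p) ℝ)), algebraMap_eq, map_prod]
    ring
  have hcoeff_all : ∀ (w : MvPolynomial (Fin p) ℝ) (β : Fin p →₀ ℕ),
      coeff β (φ w) = monomial β (coeff β w) := by
    intro w
    induction w using MvPolynomial.induction_on' with
    | monomial β' c =>
      intro β
      rw [hφmon, coeff_monomial, coeff_monomial]
      by_cases hh : β' = β
      · subst hh; simp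
      · simp [hh]
    | add u v hu hv =>
      intro β
      rw [map_add, coeff_add, coeff_add, map_add, hu, hv]
  set G : MvPolynomial (Fin p) ℝ := ∑ β ∈ F.support, f (coeff β F) • (monomial β 1 : MvPolynomial (Fin p) ℝ) with hG
  have hevalG : ∀ q : Fin p → ℝ, eval q G = 0 := by
    intro q
    set ψ : MvPolynomial (Fin p) (MvPolynomial (Fin p) ℝ) →ₐ[MvPolynomial (Fin p) ℝ] MvPolynomial (Fin p) ℝ := aeval (fun i => (C (q i) : MvPolynomial (Fin p) ℝ)) with hψ
    have hψmon : ∀ (β : Fin p →₀ ℕ) (a : MvPolynomial (Fin p) ℝ),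
        ψ (monomial β a) = eval q ((monomial β 1 : MvPolynomial (Fin p) ℝ)) • a := by
      intro β a
      rw [hψ]
      simp only [monomial_eq, map_mul, aeval_C, eval_monomial, one_mul, Finsupp.prod]
      rw [map_prod]
      simp only [map_pow, aeval_X, smul_eq_C_mul, map_one, eval_C, one_mul,
        Algebra.algebraMap_self_apply, map_prod, eval_X, eval_pow]
      ring
    have comp_eq : ((ψ.restrictScalars ℝ).comp φ) = aeval (fun i => C (q i) * X i) := by
      apply MvPolynomial.algHom_ext
      intro i
      simp [hφ, hψ, mul_comm]
    have hψF : ψ F = (1 + ∑ i : Fin p, C (q i) * X i) ^ n := by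
      have : ψ F = ((ψ.restrictScalars ℝ).comp φ) W := rfl
      rw [this, comp_eq, hW]
      simp [map_pow, map_add, map_one, map_sum, aeval_X]
    have hfψF : f (ψ F) = eval q G := by
      conv_lhs => rw [F.as_sum]
      rw [map_sum, map_sum, hG, map_sum]
      refine Finset.sum_congr rfl fun β _ => ?_
      rw [hψmon, map_smul, smul_eq_mul, smul_eq_C_mul, map_mul, eval_C, mul_comm]
    rw [← hfψF, hψF, hf q]
  have hG0 : G = 0 := by
    apply MvPolynomial.funext
    intro q
    rw [hevalG, map_zero]
  have hfc : f (coeff α F) = 0 := by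
    by_cases hmem : α ∈ F.support
    · have : coeff α G = 0 := by rw [hG0, coeff_zero]
      rw [hG] at this
      rw [coeff_sum] at this
      simp only [coeff_smul, coeff_monomial] at this
      rw [Finset.sum_eq_single α] at this
      · simpa using this
      · intro b _ hb
        simp [hb]
      · intro hc
        exact absurd hmem hc
    · rw [notMem_support_iff.mp hmem, map_zero]
  rw [hcoeff_all W α] at hfc
  have hmono : (monomial α (coeff α W) : MvPolynomial (Fin p) ℝ) = coeff α W • monomial α 1 := by
    rw [smul_monomial, smul_eq_mul, mul_one]
  rw [hmono, map_smul, smul_eq_mul] at hfc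
  have hpos : 0 < coeff α W := coeff_W_pos p n α h
  exact (mul_eq_zero.mp hfc).resolve_left hpos.ne'

set_option synthInstance.maxHeartbeats 1000000 in
/-- For every `n ∈ ℕ` and `p ≥ 1`, with `σ̂(ζ) = (1+ζ)^n`, the `ℝ`-linear span of
`{σ̂(qᵀz) : q ∈ ℝ^p}` inside `ℝ[z₁,…,z_p]` equals the space of all polynomials of total
degree at most `n`. -/
theorem stmt_12 (p n : ℕ) (hp : 1 ≤ p) :
    Submodule.span ℝ {P : MvPolynomial (Fin p) ℝ |
        ∃ q : Fin p → ℝ, P = (1 + ∑ i : Fin p, C (q i) * X i) ^ n}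
      = restrictTotalDegree (Fin p) ℝ n := by
  set S := Submodule.span ℝ {P : MvPolynomial (Fin p) ℝ |
        ∃ q : Fin p → ℝ, P = (1 + ∑ i : Fin p, C (q i) * X i) ^ n} with hSdef
  apply le_antisymm
  · rw [hSdef, Submodule.span_le]
    rintro P ⟨q, rfl⟩
    rw [SetLike.mem_coe, mem_restrictTotalDegree]
    calc ((1 + ∑ i : Fin p, C (q i) * X i) ^ n).totalDegree
        ≤ n * (1 + ∑ i : Fin p, C (q i) * X i).totalDegree := totalDegree_pow _ _
      _ ≤ n * 1 := by
          refine Nat.mul_le_mul_left n ?_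
          refine (totalDegree_add _ _).trans (max_le (by simp) ?_)
          refine (totalDegree_finset_sum _ _).trans (Finset.sup_le fun i _ => ?_)
          refine (totalDegree_mul _ _).trans ?_
          simp [totalDegree_C, totalDegree_X]
      _ = n := mul_one n
  · intro x hx
    by_contra hxS
    obtain ⟨f, hfx, hfS⟩ := Submodule.exists_dual_map_eq_bot_of_notMem hxS inferInstance
    have hf0 : ∀ P ∈ S, f P = 0 := by
      intro P hP
      have : f P ∈ S.map f := Submodule.mem_map_of_mem hP
      rw [hfS] at this
      simpa using this
    -- key claim: f vanishes on all monomials of degree ≤ n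
    have key : ∀ α : Fin p →₀ ℕ, (α.sum fun _ e => e) ≤ n →
        f ((monomial α 1 : MvPolynomial (Fin p) ℝ)) = 0 :=
      fun α hα => key_lemma p n f
        (fun q => hf0 _ (Submodule.subset_span ⟨q, rfl⟩)) α hα
    -- conclude f x = 0
    apply hfx
    rw [x.as_sum, map_sum]
    refine Finset.sum_eq_zero fun β hβ => ?_
    have h1 : (monomial β (coeff β x) : MvPolynomial (Fin p) ℝ)
        = coeff β x • monomial β 1 := by
      rw [smul_monomial, smul_eq_mul, mul_one]
    rw [h1, map_smul, key β ((le_totalDegree hβ).trans ((mem_restrictTotalDegree _ _ _).mp hx)),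
      smul_zero]
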